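/- arXiv:math/0408318 — 2 statements merged into one kernel-verified Lean document; each statement's English description precedes it below -/
import Mathlib

section
/- The intersection number [Θ_U]⁵ on U_X(2,0) equals 5: namely (1/16)·C(5,2)·1·8 = 5, where the computation pulls back under a degree-16 étale cover to SU_X(2) × J ≅ ℙ³ × J, ψ*Θ_U = O(1) ⊠ O(2Θ₀), and uses (2Θ₀)² = 8 on J and H³ = 1 on ℙ³. -/
/-- The intersection number `[Θ_U]⁵` on `U_X(2,0)` equals 5: namely
`(1/16)·C(5,2)·1·8 = 5`, computed by pulling back under the degree-16 étale cover
`ψ : SU_X(2) × J ≅ ℙ³ × J → U_X(2,0)`, with `ψ*Θ_U = O(1) ⊠ O(2Θ₀)`,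
`(2Θ₀)² = 8` on `J` and `H³ = 1` on `ℙ³`.  We model the cohomology ring of
`ℙ³ × J` as a commutative ring containing `h` (the hyperplane class, `h⁴ = 0`) and
`t = 2Θ₀` (pulled back from the surface `J`, so `t³ = 0`), with an integration map
recording `∫ h³·t² = 1·8 = 8`; the projection formula for the degree-16 cover gives
`∫ (h+t)⁵ = 16·[Θ_U]⁵`. -/
theorem stmt6 {R : Type*} [CommRing R] (h t : R)
    (hh4 : h ^ 4 = 0) (ht3 : t ^ 3 = 0)
    (integral : R →+ ℤ)
    (hht : integral (h ^ 3 * t ^ 2) = 1 * 8)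
    (ΘU5 : ℤ)
    (hproj : integral ((h + t) ^ 5) = 16 * ΘU5) :
    16 * ΘU5 = (Nat.choose 5 2 : ℤ) * 1 * 8 ∧ ΘU5 = 5 := by
  have key : (h + t) ^ 5 = 10 * (h ^ 3 * t ^ 2) := by
    have e : (h + t) ^ 5 = h * h ^ 4 + 5 * (h ^ 4 * t) + 10 * (h ^ 3 * t ^ 2)
        + 10 * (h ^ 2 * t ^ 3) + 5 * (h * (t * t ^ 3)) + t ^ 2 * t ^ 3 := by ring
    rw [e, hh4, ht3]; ring
  have hint : integral ((h + t) ^ 5) = 80 := by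
    rw [key]
    have : (10 : R) * (h ^ 3 * t ^ 2) = (10 : ℤ) • (h ^ 3 * t ^ 2) := by
      simp [zsmul_eq_mul]
    rw [this, map_zsmul, hht]; norm_num
  have h16 : 16 * ΘU5 = 80 := by rw [← hproj, hint]
  constructor
  · simpa [Nat.choose] using h16
  · omega
end

section
/- On a smooth projective surface S̃ with canonical class K = 2H where H² = 6, any divisor class D̃ = 6H − ∑_{i=1}^{45} aᵢEᵢ with aᵢ ≥ 2, Eᵢ disjoint (−2)-curves orthogonal to H, has arithmetic genus p_a(D̃) ≤ −35; in particular D̃ cannot be an effective reduced connected curve. -/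
/-- On a smooth projective surface `S̃` with canonical class `K = 2H`,
`H² = 6`, and 45 disjoint (−2)-curves `Eᵢ` orthogonal to `H`, any divisor class
`D̃ = 6H − ∑ aᵢEᵢ` with `aᵢ ≥ 2` has arithmetic genus (given by adjunction
`2p_a − 2 = (K + D̃)·D̃`) at most `−35`; in particular `D̃` cannot be an effective
reduced connected curve (whose arithmetic genus would be nonnegative).  We model the
Néron–Severi lattice as a `ℤ`-module with the intersection pairing `B`. -/
theorem stmt16 {M : Type*} [AddCommGroup M] [Module ℤ M]
    (B : M →ₗ[ℤ] M →ₗ[ℤ] ℤ)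
    (H : M) (E : Fin 45 → M)
    (hHH : B H H = 6)
    (hHE : ∀ i, B H (E i) = 0) (hEH : ∀ i, B (E i) H = 0)
    (hEE : ∀ i, B (E i) (E i) = -2)
    (hEij : ∀ i j, i ≠ j → B (E i) (E j) = 0)
    (a : Fin 45 → ℤ) (ha : ∀ i, 2 ≤ a i)
    (K D : M)
    (hK : K = (2 : ℤ) • H)
    (hD : D = (6 : ℤ) • H - ∑ i, a i • E i)
    (pa : ℤ) (hadj : 2 * pa - 2 = B (K + D) D)
    (IsEffectiveReducedConnectedCurve : Prop)
    (hgenusNonneg : IsEffectiveReducedConnectedCurve → 0 ≤ pa) :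
    pa ≤ -35 ∧ ¬ IsEffectiveReducedConnectedCurve := by
  set S := ∑ i, a i • E i with hS
  have hSx : ∀ x, B S x = ∑ i, a i * B (E i) x := fun x => by
    rw [hS]
    simp only [map_sum, LinearMap.sum_apply, map_zsmul, LinearMap.smul_apply, smul_eq_mul]
  have hES : ∀ i, B (E i) S = -2 * a i := by
    intro i
    rw [hS, map_sum]
    simp only [map_zsmul, smul_eq_mul]
    rw [Finset.sum_eq_single i]
    · rw [hEE]; ring
    · intro j _ hj; rw [hEij i j (Ne.symm hj), mul_zero]
    · simp
  have hHS : B H S = 0 := by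
    rw [hS, map_sum]; simp [hHE]
  have hSH : B S H = 0 := by
    rw [hSx]; simp [hEH]
  have hSS : B S S = -2 * ∑ i, a i ^ 2 := by
    rw [hSx, Finset.mul_sum]
    refine Finset.sum_congr rfl fun i _ => ?_
    rw [hES]; ring
  have key : B (K + D) D = 288 - 2 * ∑ i, a i ^ 2 := by
    subst hK hD
    simp only [map_add, map_sub, LinearMap.add_apply, LinearMap.sub_apply, map_zsmul,
      LinearMap.smul_apply, smul_eq_mul, hHH, hHS, hSH, hSS, ← hS]
    ring
  have hsum : (180 : ℤ) ≤ ∑ i, a i ^ 2 := by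
    calc (180 : ℤ) = ∑ _i : Fin 45, (4 : ℤ) := by simp
    _ ≤ ∑ i, a i ^ 2 := Finset.sum_le_sum fun i _ => by nlinarith [ha i]
  have hpa : pa ≤ -35 := by rw [key] at hadj; linarith
  exact ⟨hpa, fun h => by linarith [hgenusNonneg h]⟩
end
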